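/- Monotonicity in the parameters: for a ≥ 0 and b ≥ 0, the solutions satisfy x(0,b) ≤ x(a,b) ≤ x(a,0) pointwise on [0, τ₀ ∧ T], where x(a,b) denotes the solution of dx = (a - bx)dt + σ x^β dw with initial condition x₀ > 0. -/

import Mathlib

open Real Set intervalIntegral

section Aux

/-- Primitive of a function starting at `0`. -/
noncomputable def itg (h : ℝ → ℝ) (t : ℝ) : ℝ := ∫ u in (0:ℝ)..t, h u

lemma itg_hasDerivAt (h : ℝ → ℝ) (hc : Continuous h) (t : ℝ) :
    HasDerivAt (itg h) (h t) t := by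
  have := (hc.integral_hasStrictDerivAt 0 t).hasDerivAt
  exact this

lemma itg_continuous (h : ℝ → ℝ) (hc : Continuous h) : Continuous (itg h) :=
  continuous_iff_continuousAt.2 fun t => (itg_hasDerivAt h hc t).continuousAt

lemma itg_zero (h : ℝ → ℝ) : itg h 0 = 0 := intervalIntegral.integral_same

/-- Transformation lemma: if `y` solves the integral equation with exponential weights,
then `z t = exp(-(c*t)) * y t` solves the damped equation. -/
lemma key_transform (c k s X γ bb τ : ℝ) (hτ : 0 ≤ τ) (hbb : bb = c * (γ + 1))
    (y w : ℝ → ℝ) (hy : Continuous y) (hw : Continuous w) (hypos : ∀ t, 0 < y t)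
    (heq : ∀ t ∈ Set.Icc (0:ℝ) τ,
      y t = X + k * (∫ u in (0:ℝ)..t, (y u) ^ (-γ) * Real.exp (bb * u))
        + s * (Real.exp (c * t) * w t - w 0
            - c * ∫ u in (0:ℝ)..t, Real.exp (c * u) * w u)) :
    ∀ t ∈ Set.Icc (0:ℝ) τ,
      Real.exp (-(c*t)) * y t
        = X + k * (∫ u in (0:ℝ)..t, (Real.exp (-(c*u)) * y u) ^ (-γ))
          + s * (w t - w 0) - c * ∫ u in (0:ℝ)..t, Real.exp (-(c*u)) * y u := by
  have heq' : ∀ t ∈ Set.Icc (0:ℝ) τ,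
      y t = X + k * itg (fun u => (y u) ^ (-γ) * Real.exp (bb * u)) t
        + s * (Real.exp (c * t) * w t - w 0
            - c * itg (fun u => Real.exp (c * u) * w u) t) := by
    intro t ht; simpa only [itg] using heq t ht
  have hexpc : Continuous fun u : ℝ => Real.exp (-(c*u)) :=
    Real.continuous_exp.comp ((continuous_const.mul continuous_id).neg)
  have hfc : Continuous (fun u => (y u) ^ (-γ) * Real.exp (bb * u)) :=
    (hy.rpow_const (fun u => Or.inl (hypos u).ne')).mul
      (Real.continuous_exp.comp (continuous_const.mul continuous_id))
  have hg1c : Continuous (fun u => Real.exp (c * u) * w u) :=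
    (Real.continuous_exp.comp (continuous_const.mul continuous_id)).mul hw
  have hzc : Continuous (fun u => Real.exp (-(c*u)) * y u) := hexpc.mul hy
  have hzpos : ∀ u, 0 < Real.exp (-(c*u)) * y u :=
    fun u => mul_pos (Real.exp_pos _) (hypos u)
  have hzγc : Continuous (fun u => (Real.exp (-(c*u)) * y u) ^ (-γ)) :=
    hzc.rpow_const (fun u => Or.inl (hzpos u).ne')
  have hI := itg_hasDerivAt _ hfc
  have hJ := itg_hasDerivAt _ hg1c
  have hZγ := itg_hasDerivAt _ hzγc
  have hZz := itg_hasDerivAt _ hzc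
  have hIc := itg_continuous _ hfc
  have hJc := itg_continuous _ hg1c
  have hZγc := itg_continuous _ hzγc
  have hZzc := itg_continuous _ hzc
  have hone : ∀ t : ℝ, Real.exp (-(c*t)) * Real.exp (c*t) = 1 := by
    intro t; rw [← Real.exp_add, neg_add_cancel, Real.exp_zero]
  -- P t = z t - s * w t on [0, τ]
  have hPz : ∀ t ∈ Set.Icc (0:ℝ) τ,
      Real.exp (-(c*t)) * (X + k * itg (fun u => (y u) ^ (-γ) * Real.exp (bb * u)) t
          - s * w 0 - s * c * itg (fun u => Real.exp (c * u) * w u) t)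
        = Real.exp (-(c*t)) * y t - s * w t := by
    intro t ht
    have h := heq' t ht
    have he := hone t
    linear_combination (-(Real.exp (-(c*t)))) * h - (s * w t) * he
  -- exponent identities
  have hzγf : ∀ t : ℝ, Real.exp (-(c*t)) * ((y t) ^ (-γ) * Real.exp (bb * t))
      = (Real.exp (-(c*t)) * y t) ^ (-γ) := by
    intro t
    have h1 : (Real.exp (-(c*t)) * y t) ^ (-γ)
        = Real.exp (-(c*t)) ^ (-γ) * (y t) ^ (-γ) :=
      Real.mul_rpow (Real.exp_pos _).le (hypos t).le
    have h2 : Real.exp (-(c*t)) ^ (-γ) = Real.exp (c * t * γ) := by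
      rw [← Real.exp_mul]; ring_nf
    have h3 : Real.exp (-(c*t)) * Real.exp (bb * t) = Real.exp (c * t * γ) := by
      rw [← Real.exp_add]; congr 1; rw [hbb]; ring
    rw [h1, h2, ← h3]; ring
  have hwg1 : ∀ t : ℝ, Real.exp (-(c*t)) * (Real.exp (c * t) * w t) = w t := by
    intro t
    rw [← mul_assoc, hone t, one_mul]
  -- derivative of P
  have hPderiv : ∀ t ∈ Set.Icc (0:ℝ) τ,
      HasDerivAt (fun u => Real.exp (-(c*u)) *
          (X + k * itg (fun v => (y v) ^ (-γ) * Real.exp (bb * v)) u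
            - s * w 0 - s * c * itg (fun v => Real.exp (c * v) * w v) u))
        (k * (Real.exp (-(c*t)) * y t) ^ (-γ) - c * (Real.exp (-(c*t)) * y t)) t := by
    intro t ht
    have hE : HasDerivAt (fun u : ℝ => Real.exp (-(c*u))) (Real.exp (-(c*t)) * (-c)) t := by
      have hinner : HasDerivAt (fun u : ℝ => -(c*u)) (-c) t := by
        simpa using (hasDerivAt_neg t).const_mul c
      exact hinner.exp
    have hG : HasDerivAt (fun u =>
          X + k * itg (fun v => (y v) ^ (-γ) * Real.exp (bb * v)) u
            - s * w 0 - s * c * itg (fun v => Real.exp (c * v) * w v) u)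
        (k * ((y t) ^ (-γ) * Real.exp (bb * t)) - s * c * (Real.exp (c * t) * w t)) t := by
      exact ((((hI t).const_mul k).const_add X).sub_const (s * w 0)).sub
        ((hJ t).const_mul (s * c))
    have h0 := hE.mul hG
    refine h0.congr_deriv ?_; symm
    have hp := hPz t ht
    have h2 := hzγf t
    have h3 := hwg1 t
    linear_combination c * hp - k * h2 + s * c * h3
  -- derivative of Q
  have hQderiv : ∀ t : ℝ,
      HasDerivAt (fun u => X - s * w 0
          + k * itg (fun v => (Real.exp (-(c*v)) * y v) ^ (-γ)) u
          - c * itg (fun v => Real.exp (-(c*v)) * y v) u)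
        (k * (Real.exp (-(c*t)) * y t) ^ (-γ) - c * (Real.exp (-(c*t)) * y t)) t := by
    intro t
    exact (((hZγ t).const_mul k).const_add (X - s * w 0)).sub ((hZz t).const_mul c)
  have hPQ : ∀ t ∈ Set.Icc (0:ℝ) τ,
      (fun u => Real.exp (-(c*u)) *
          (X + k * itg (fun v => (y v) ^ (-γ) * Real.exp (bb * v)) u
            - s * w 0 - s * c * itg (fun v => Real.exp (c * v) * w v) u)) t
      = (fun u => X - s * w 0
          + k * itg (fun v => (Real.exp (-(c*v)) * y v) ^ (-γ)) u
          - c * itg (fun v => Real.exp (-(c*v)) * y v) u) t := by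
    apply eq_of_has_deriv_right_eq
      (f' := fun t => k * (Real.exp (-(c*t)) * y t) ^ (-γ) - c * (Real.exp (-(c*t)) * y t))
    · intro x hx
      exact (hPderiv x ⟨hx.1, hx.2.le⟩).hasDerivWithinAt
    · intro x hx
      exact (hQderiv x).hasDerivWithinAt
    · exact (hexpc.mul (((continuous_const.add (continuous_const.mul hIc)).sub
        continuous_const).sub (continuous_const.mul hJc))).continuousOn
    · exact ((continuous_const.add (continuous_const.mul hZγc)).sub
        (continuous_const.mul hZzc)).continuousOn
    · simp [itg_zero]
  intro t ht
  have h1 := hPz t ht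
  have h2 := hPQ t ht
  simp only [] at h2
  have hgoal : Real.exp (-(c*t)) * y t
      = X + k * itg (fun v => (Real.exp (-(c*v)) * y v) ^ (-γ)) t
        + s * (w t - w 0) - c * itg (fun v => Real.exp (-(c*v)) * y v) t := by
    linear_combination h2 - h1
  simpa only [itg] using hgoal

/-- Comparison lemma via crossing-time argument. -/
lemma key_compare (τ k c γ X s : ℝ) (hτ : 0 ≤ τ) (hk : 0 ≤ k) (hc : 0 ≤ c) (hγ : 0 < γ)
    (w z y : ℝ → ℝ)
    (hz : ContinuousOn z (Set.Icc 0 τ)) (hy : ContinuousOn y (Set.Icc 0 τ))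
    (hzpos : ∀ t ∈ Set.Icc (0:ℝ) τ, 0 < z t) (hypos : ∀ t ∈ Set.Icc (0:ℝ) τ, 0 < y t)
    (hzeq : ∀ t ∈ Set.Icc (0:ℝ) τ, z t = X + k * (∫ u in (0:ℝ)..t, (z u) ^ (-γ))
        + s * (w t - w 0) - c * ∫ u in (0:ℝ)..t, z u)
    (hyeq : ∀ t ∈ Set.Icc (0:ℝ) τ, y t = X + k * (∫ u in (0:ℝ)..t, (y u) ^ (-γ))
        + s * (w t - w 0)) :
    ∀ t ∈ Set.Icc (0:ℝ) τ, z t ≤ y t := by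
  have hyγc : ContinuousOn (fun u => (y u) ^ (-γ)) (Set.Icc 0 τ) :=
    hy.rpow_const (fun x hx => Or.inl (hypos x hx).ne')
  have hzγc : ContinuousOn (fun u => (z u) ^ (-γ)) (Set.Icc 0 τ) :=
    hz.rpow_const (fun x hx => Or.inl (hzpos x hx).ne')
  have hgc : ContinuousOn (fun u => k * ((y u) ^ (-γ) - (z u) ^ (-γ)) + c * z u)
      (Set.Icc 0 τ) :=
    (continuousOn_const.mul (hyγc.sub hzγc)).add (continuousOn_const.mul hz)
  have hsub : ∀ a b : ℝ, a ∈ Set.Icc (0:ℝ) τ → b ∈ Set.Icc (0:ℝ) τ →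
      Set.uIcc a b ⊆ Set.Icc (0:ℝ) τ := fun a b ha hb => Set.uIcc_subset_Icc ha hb
  have h0mem : (0:ℝ) ∈ Set.Icc (0:ℝ) τ := ⟨le_refl _, hτ⟩
  -- d t = ∫₀ᵗ g
  have hd : ∀ t ∈ Set.Icc (0:ℝ) τ,
      y t - z t = ∫ u in (0:ℝ)..t, (k * ((y u) ^ (-γ) - (z u) ^ (-γ)) + c * z u) := by
    intro t ht
    have hiy : IntervalIntegrable (fun u => (y u) ^ (-γ)) MeasureTheory.volume 0 t :=
      (hyγc.mono (hsub 0 t h0mem ht)).intervalIntegrable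
    have hiz : IntervalIntegrable (fun u => (z u) ^ (-γ)) MeasureTheory.volume 0 t :=
      (hzγc.mono (hsub 0 t h0mem ht)).intervalIntegrable
    have hizz : IntervalIntegrable z MeasureTheory.volume 0 t :=
      (hz.mono (hsub 0 t h0mem ht)).intervalIntegrable
    have e1 : (∫ u in (0:ℝ)..t, (k * ((y u) ^ (-γ) - (z u) ^ (-γ)) + c * z u))
        = k * ((∫ u in (0:ℝ)..t, (y u) ^ (-γ)) - ∫ u in (0:ℝ)..t, (z u) ^ (-γ))
          + c * ∫ u in (0:ℝ)..t, z u := by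
      rw [intervalIntegral.integral_add ((hiy.sub hiz).const_mul k) (hizz.const_mul c),
        intervalIntegral.integral_const_mul, intervalIntegral.integral_const_mul,
        intervalIntegral.integral_sub hiy hiz]
    rw [hyeq t ht, hzeq t ht, e1]; ring
  by_contra hcon
  push_neg at hcon
  obtain ⟨t₁, ht₁, hlt⟩ := hcon
  have hd0 : y 0 - z 0 = 0 := by
    have := hd 0 h0mem
    simpa [intervalIntegral.integral_same] using this
  set S : Set ℝ := Set.Icc 0 t₁ ∩ (fun t => y t - z t) ⁻¹' Set.Ici 0 with hSdef
  have hS0 : (0:ℝ) ∈ S := ⟨⟨le_refl _, ht₁.1⟩, by simp [hd0]⟩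
  have hSbdd : BddAbove S := ⟨t₁, fun x hx => hx.1.2⟩
  have hSclosed : IsClosed S := by
    have hco : ContinuousOn (fun t => y t - z t) (Set.Icc 0 t₁) :=
      (hy.sub hz).mono (Set.Icc_subset_Icc_right ht₁.2)
    exact hco.preimage_isClosed_of_isClosed isClosed_Icc isClosed_Ici
  have htsS : sSup S ∈ S := hSclosed.csSup_mem ⟨0, hS0⟩ hSbdd
  set ts := sSup S with htsdef
  have hts0 : 0 ≤ ts := htsS.1.1
  have htst₁ : ts ≤ t₁ := htsS.1.2
  have htsd : 0 ≤ y ts - z ts := htsS.2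
  have htsτ : ts ∈ Set.Icc (0:ℝ) τ := ⟨hts0, le_trans htst₁ ht₁.2⟩
  have htslt : ts < t₁ := by
    rcases lt_or_eq_of_le htst₁ with h | h
    · exact h
    · exfalso; rw [h] at htsd; linarith
  have hIoc : ∀ u ∈ Set.Ioc ts t₁, y u - z u < 0 := by
    intro u hu
    by_contra hge
    push_neg at hge
    have : u ∈ S := ⟨⟨le_trans hts0 hu.1.le, hu.2⟩, hge⟩
    exact absurd (le_csSup hSbdd this) (not_le.2 hu.1)
  have hdts : y ts - z ts = 0 := by
    refine le_antisymm ?_ htsd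
    by_contra hpos
    push_neg at hpos
    have hcw : ContinuousWithinAt (fun u => y u - z u) (Set.Icc 0 τ) ts :=
      (hy.sub hz) ts htsτ
    have hev : ∀ᶠ u in nhdsWithin ts (Set.Icc 0 τ), 0 < y u - z u :=
      hcw.eventually (eventually_gt_nhds hpos)
    have htsτ' : ts < τ := lt_of_lt_of_le htslt ht₁.2
    have hle : nhdsWithin ts (Set.Ioi ts) ≤ nhdsWithin ts (Set.Icc 0 τ) := by
      rw [← nhdsWithin_Ioc_eq_nhdsGT htsτ']
      exact nhdsWithin_mono _ (fun u hu => ⟨le_trans hts0 hu.1.le, hu.2⟩)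
    have hev2 : ∀ᶠ u in nhdsWithin ts (Set.Ioi ts), 0 < y u - z u := hev.filter_mono hle
    have hmem : Set.Ioc ts t₁ ∈ nhdsWithin ts (Set.Ioi ts) := by
      have h1 : Set.Iic t₁ ∈ nhds ts := Iic_mem_nhds htslt
      have h2 : Set.Ioi ts ∈ nhdsWithin ts (Set.Ioi ts) := self_mem_nhdsWithin
      have h3 : Set.Ioi ts ∩ Set.Iic t₁ ∈ nhdsWithin ts (Set.Ioi ts) :=
        Filter.inter_mem h2 (mem_nhdsWithin_of_mem_nhds h1)
      rwa [Set.Ioi_inter_Iic] at h3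
    obtain ⟨u, hu1, hu2⟩ := (hev2.and (Filter.eventually_of_mem hmem (fun x hx => hx))).exists
    exact absurd hu1 (not_lt.2 (hIoc u hu2).le)
  -- g nonneg on [ts, t₁]
  have hgnn : ∀ u ∈ Set.Icc ts t₁, 0 ≤ k * ((y u) ^ (-γ) - (z u) ^ (-γ)) + c * z u := by
    intro u hu
    have huτ : u ∈ Set.Icc (0:ℝ) τ := ⟨le_trans hts0 hu.1, le_trans hu.2 ht₁.2⟩
    have hyzu : y u ≤ z u := by
      rcases eq_or_lt_of_le hu.1 with h | h
      · rw [← h]; linarith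
      · linarith [hIoc u ⟨h, hu.2⟩]
    have hyu : 0 < y u := hypos u huτ
    have hrpow : (z u) ^ (-γ) ≤ (y u) ^ (-γ) :=
      Real.rpow_le_rpow_of_nonpos hyu hyzu (by linarith)
    have h2 : 0 ≤ c * z u := mul_nonneg hc (hzpos u huτ).le
    nlinarith
  have hi1 : IntervalIntegrable (fun u => k * ((y u) ^ (-γ) - (z u) ^ (-γ)) + c * z u)
      MeasureTheory.volume 0 ts :=
    (hgc.mono (hsub 0 ts h0mem htsτ)).intervalIntegrable
  have hi2 : IntervalIntegrable (fun u => k * ((y u) ^ (-γ) - (z u) ^ (-γ)) + c * z u)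
      MeasureTheory.volume ts t₁ :=
    (hgc.mono (hsub ts t₁ htsτ ht₁)).intervalIntegrable
  have hsplit := intervalIntegral.integral_add_adjacent_intervals hi1 hi2
  have hint_nn : 0 ≤ ∫ u in ts..t₁, (k * ((y u) ^ (-γ) - (z u) ^ (-γ)) + c * z u) :=
    intervalIntegral.integral_nonneg htslt.le hgnn
  have hdt₁ := hd t₁ ht₁
  have hdts' := hd ts htsτ
  have : 0 ≤ y t₁ - z t₁ := by
    rw [hdt₁, ← hsplit, ← hdts', hdts]
    linarith
  linarith

end Aux

/-- Monotonicity in the parameters: `x(0,b) ≤ x(a,b) ≤ x(a,0)` pointwise, where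
`x(a,b) = y(a,b)^{γ+1}e^{-b·}` and `y(a,b)` solves
`y_t = x₀^{1-β} + a(1-β)∫₀ᵗ y_s^{-γ}e^{bs}ds + w̃_b(t)`, the Young integral
`w̃_b(t) = σ(1-β)∫₀ᵗ e^{b(1-β)s}dw_s` being expressed via integration by parts. -/
theorem stmt_12 (T a b σ α β γ x₀ τ : ℝ) (w yab y0b ya0 : ℝ → ℝ)
    (hT : 0 < T) (ha : 0 ≤ a) (hb : 0 ≤ b) (hσ : 0 ≤ σ)
    (hα : α ∈ Set.Ioc (0 : ℝ) 1) (hβ : β ∈ Set.Ioc (1 - α) 1) (hβ1 : β < 1)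
    (hγ : γ = β / (1 - β)) (hx₀ : 0 < x₀) (hτ : τ ∈ Set.Icc (0 : ℝ) T)
    (hwc : ContinuousOn w (Set.Icc 0 T))
    (hab_c : ContinuousOn yab (Set.Icc 0 τ))
    (h0b_c : ContinuousOn y0b (Set.Icc 0 τ))
    (ha0_c : ContinuousOn ya0 (Set.Icc 0 τ))
    (hab_pos : ∀ t ∈ Set.Icc (0 : ℝ) τ, 0 < yab t)
    (h0b_pos : ∀ t ∈ Set.Icc (0 : ℝ) τ, 0 < y0b t)
    (ha0_pos : ∀ t ∈ Set.Icc (0 : ℝ) τ, 0 < ya0 t)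
    (hab_eq : ∀ t ∈ Set.Icc (0 : ℝ) τ,
      yab t = x₀ ^ (1 - β)
        + a * (1 - β) * (∫ s in (0 : ℝ)..t, (yab s) ^ (-γ) * Real.exp (b * s))
        + σ * (1 - β) * (Real.exp (b * (1 - β) * t) * w t - w 0
            - b * (1 - β) * ∫ u in (0 : ℝ)..t, Real.exp (b * (1 - β) * u) * w u))
    (h0b_eq : ∀ t ∈ Set.Icc (0 : ℝ) τ,
      y0b t = x₀ ^ (1 - β)
        + σ * (1 - β) * (Real.exp (b * (1 - β) * t) * w t - w 0
            - b * (1 - β) * ∫ u in (0 : ℝ)..t, Real.exp (b * (1 - β) * u) * w u))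
    (ha0_eq : ∀ t ∈ Set.Icc (0 : ℝ) τ,
      ya0 t = x₀ ^ (1 - β)
        + a * (1 - β) * (∫ s in (0 : ℝ)..t, (ya0 s) ^ (-γ))
        + σ * (1 - β) * (w t - w 0)) :
    ∀ t ∈ Set.Icc (0 : ℝ) τ,
      (y0b t) ^ (γ + 1) * Real.exp (-(b * t)) ≤ (yab t) ^ (γ + 1) * Real.exp (-(b * t)) ∧
      (yab t) ^ (γ + 1) * Real.exp (-(b * t)) ≤ (ya0 t) ^ (γ + 1) := by
  have hτ0 : 0 ≤ τ := hτ.1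
  have hτT : τ ≤ T := hτ.2
  have hβ0 : 0 < β := lt_of_le_of_lt (by linarith [hα.2]) hβ.1
  have h1β : 0 < 1 - β := by linarith
  have hγ0 : 0 < γ := by rw [hγ]; positivity
  have hγ1 : γ + 1 = 1 / (1 - β) := by rw [hγ]; field_simp; ring
  have hcγ : b = b * (1 - β) * (γ + 1) := by rw [hγ1]; field_simp
  -- part 1: y0b ≤ yab
  have hle1 : ∀ t ∈ Set.Icc (0:ℝ) τ, y0b t ≤ yab t := by
    intro t ht
    have h1 := hab_eq t ht
    have h2 := h0b_eq t ht
    have hnn : 0 ≤ ∫ s in (0:ℝ)..t, (yab s) ^ (-γ) * Real.exp (b * s) := by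
      apply intervalIntegral.integral_nonneg ht.1
      intro u hu
      have : 0 ≤ (yab u : ℝ) := (hab_pos u ⟨hu.1, le_trans hu.2 ht.2⟩).le
      positivity
    nlinarith [mul_nonneg (mul_nonneg ha h1β.le) hnn]
  -- extensions of yab and w
  have hπcont : Continuous (fun u : ℝ => max 0 (min u τ)) :=
    continuous_const.max (continuous_id.min continuous_const)
  have hπmem : ∀ u : ℝ, max 0 (min u τ) ∈ Set.Icc (0:ℝ) τ :=
    fun u => ⟨le_max_left _ _, max_le hτ0 (min_le_right _ _)⟩
  have hπid : ∀ u ∈ Set.Icc (0:ℝ) τ, max 0 (min u τ) = u := by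
    intro u hu
    rw [min_eq_left hu.2, max_eq_right hu.1]
  have hπTcont : Continuous (fun u : ℝ => max 0 (min u T)) :=
    continuous_const.max (continuous_id.min continuous_const)
  have hπTmem : ∀ u : ℝ, max 0 (min u T) ∈ Set.Icc (0:ℝ) T :=
    fun u => ⟨le_max_left _ _, max_le hT.le (min_le_right _ _)⟩
  have hπTid : ∀ u ∈ Set.Icc (0:ℝ) T, max 0 (min u T) = u := by
    intro u hu
    rw [min_eq_left hu.2, max_eq_right hu.1]
  set Y : ℝ → ℝ := fun u => yab (max 0 (min u τ)) with hYdef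
  set W : ℝ → ℝ := fun u => w (max 0 (min u T)) with hWdef
  have hYc : Continuous Y := hab_c.comp_continuous hπcont hπmem
  have hWc : Continuous W := hwc.comp_continuous hπTcont hπTmem
  have hYpos : ∀ u, 0 < Y u := fun u => hab_pos _ (hπmem u)
  have hYeq : ∀ u ∈ Set.Icc (0:ℝ) τ, Y u = yab u := fun u hu => by
    simp only [hYdef]; rw [hπid u hu]
  have hWeq : ∀ u ∈ Set.Icc (0:ℝ) T, W u = w u := fun u hu => by
    simp only [hWdef]; rw [hπTid u hu]
  have hsubT : Set.Icc (0:ℝ) τ ⊆ Set.Icc (0:ℝ) T := Set.Icc_subset_Icc_right hτT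
  have hW0 : W 0 = w 0 := hWeq 0 ⟨le_refl _, hT.le⟩
  -- transfer the equation to Y, W
  have hYWeq : ∀ t ∈ Set.Icc (0:ℝ) τ,
      Y t = x₀ ^ (1 - β) + a * (1 - β) * (∫ u in (0:ℝ)..t, (Y u) ^ (-γ) * Real.exp (b * u))
        + σ * (1 - β) * (Real.exp (b * (1 - β) * t) * W t - W 0
            - b * (1 - β) * ∫ u in (0:ℝ)..t, Real.exp (b * (1 - β) * u) * W u) := by
    intro t ht
    have hint1 : (∫ u in (0:ℝ)..t, (Y u) ^ (-γ) * Real.exp (b * u))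
        = ∫ u in (0:ℝ)..t, (yab u) ^ (-γ) * Real.exp (b * u) := by
      apply intervalIntegral.integral_congr
      intro u hu
      have huτ : u ∈ Set.Icc (0:ℝ) τ := Set.uIcc_subset_Icc ⟨le_refl _, hτ0⟩ ht hu
      simp only []
      rw [hYeq u huτ]
    have hint2 : (∫ u in (0:ℝ)..t, Real.exp (b * (1 - β) * u) * W u)
        = ∫ u in (0:ℝ)..t, Real.exp (b * (1 - β) * u) * w u := by
      apply intervalIntegral.integral_congr
      intro u hu
      have huτ : u ∈ Set.Icc (0:ℝ) τ := Set.uIcc_subset_Icc ⟨le_refl _, hτ0⟩ ht hu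
      simp only []
      rw [hWeq u (hsubT huτ)]
    rw [hYeq t ht, hint1, hint2, hW0, hWeq t (hsubT ht)]
    exact hab_eq t ht
  -- apply transformation
  have hZeq := key_transform (b * (1 - β)) (a * (1 - β)) (σ * (1 - β)) (x₀ ^ (1 - β)) γ b τ
    hτ0 hcγ Y W hYc hWc hYpos hYWeq
  -- comparison
  have hZc : Continuous (fun u => Real.exp (-(b * (1 - β) * u)) * Y u) :=
    (Real.continuous_exp.comp ((continuous_const.mul continuous_id).neg)).mul hYc
  have hZpos : ∀ u : ℝ, 0 < Real.exp (-(b * (1 - β) * u)) * Y u :=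
    fun u => mul_pos (Real.exp_pos _) (hYpos u)
  have hya0eqW : ∀ t ∈ Set.Icc (0:ℝ) τ,
      ya0 t = x₀ ^ (1 - β) + a * (1 - β) * (∫ u in (0:ℝ)..t, (ya0 u) ^ (-γ))
        + σ * (1 - β) * (W t - W 0) := by
    intro t ht
    rw [hWeq t (hsubT ht), hW0]
    exact ha0_eq t ht
  have hcomp := key_compare τ (a * (1 - β)) (b * (1 - β)) γ (x₀ ^ (1 - β)) (σ * (1 - β))
    hτ0 (mul_nonneg ha h1β.le) (mul_nonneg hb h1β.le) hγ0 W
    (fun u => Real.exp (-(b * (1 - β) * u)) * Y u) ya0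
    hZc.continuousOn ha0_c (fun t _ => hZpos t) ha0_pos hZeq hya0eqW
  intro t ht
  constructor
  · have h1 := hle1 t ht
    have h2 : (y0b t) ^ (γ + 1) ≤ (yab t) ^ (γ + 1) :=
      Real.rpow_le_rpow (h0b_pos t ht).le h1 (by linarith)
    exact mul_le_mul_of_nonneg_right h2 (Real.exp_pos _).le
  · have hzle : Real.exp (-(b * (1 - β) * t)) * yab t ≤ ya0 t := by
      have h0 : Real.exp (-(b * (1 - β) * t)) * Y t ≤ ya0 t := hcomp t ht
      rwa [hYeq t ht] at h0
    have h2 : (Real.exp (-(b * (1 - β) * t)) * yab t) ^ (γ + 1) ≤ (ya0 t) ^ (γ + 1) :=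
      Real.rpow_le_rpow (mul_pos (Real.exp_pos _) (hab_pos t ht)).le hzle (by linarith)
    have h3 : (Real.exp (-(b * (1 - β) * t)) * yab t) ^ (γ + 1)
        = (yab t) ^ (γ + 1) * Real.exp (-(b * t)) := by
      rw [Real.mul_rpow (Real.exp_pos _).le (hab_pos t ht).le, ← Real.exp_mul, mul_comm]
      congr 2
      linear_combination t * hcγ
    rw [← h3]
    exact h2
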